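/- Projected overlap floor for vector-valued hard classes: Let X be uniformly distributed on [0,1], let w* : [0,1] → ℝ^J be measurable and square-integrable, and suppose there exist a unit vector v ∈ ℝ^J, an interval [a,b] ⊆ [0,1], and κ > 0 such that the projected map g(x) := vᵀ w*(x) satisfies g(t) − g(s) ≥ κ(t − s) for all a ≤ s < t ≤ b. Then for every M ≥ 1, inf_{w ∈ W^hard_M} E[‖w*(X) − w(X)‖₂²] ≥ κ² (b − a)³ / (12 M²), where W^hard_M is the class of functions [0,1] → ℝ^J constant on each cell of a partition of [0,1] into at most M intervals. -/

import Mathlib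

open MeasureTheory


lemma pointwise_floor (g : ℝ → ℝ) (κ s t : ℝ) (hκ : 0 < κ) (hst : s ≤ t)
    (hg : ∀ x y, s ≤ x → x < y → y ≤ t → κ * (y - x) ≤ g y - g x) (c : ℝ) :
    ∃ m ∈ Set.Icc s t, ∀ x ∈ Set.Icc s t, κ ^ 2 * (x - m) ^ 2 ≤ (g x - c) ^ 2 := by
  set A : Set ℝ := insert s {x ∈ Set.Icc s t | g x ≤ c} with hA
  have hAne : A.Nonempty := ⟨s, Set.mem_insert _ _⟩
  have hAbd : BddAbove A := by
    refine ⟨t, fun y hy => ?_⟩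
    rcases hy with rfl | hy
    · exact hst
    · exact hy.1.2
  set m := sSup A with hm
  have hsm : s ≤ m := le_csSup hAbd (Set.mem_insert _ _)
  have hmt : m ≤ t := csSup_le hAne (fun y hy => by
    rcases hy with rfl | hy; exacts [hst, hy.1.2])
  refine ⟨m, ⟨hsm, hmt⟩, fun x hx => ?_⟩
  rcases lt_trichotomy x m with hxm | rfl | hmx
  · -- x < m : c - g x ≥ κ (m - x)
    have key : κ * (m - x) ≤ c - g x := by
      refine le_of_forall_pos_le_add fun ε hε => ?_
      have hδ : 0 < ε / κ := div_pos hε hκ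
      obtain ⟨y, hyA, hy⟩ := exists_lt_of_lt_csSup hAne
        (show max x (m - ε / κ) < m by rw [max_lt_iff]; exact ⟨hxm, by linarith⟩)
      have hyx : x < y := (le_max_left _ _).trans_lt hy
      have hys : y ≠ s := fun h => absurd (h ▸ hyx) (not_lt.2 hx.1)
      rcases hyA with rfl | hyA
      · exact absurd rfl hys
      have h1 := hg x y hx.1 hyx hyA.1.2
      have hy2 : m - ε / κ < y := (le_max_right _ _).trans_lt hy
      have h2 : κ * (y - x) ≤ c - g x := by linarith [hyA.2]
      have h3 : κ * (m - ε / κ - x) ≤ κ * (y - x) := by nlinarith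
      have h4 : κ * (m - ε / κ - x) = κ * (m - x) - ε := by
        field_simp; ring
      linarith
    have h0 : 0 ≤ κ * (m - x) := by nlinarith
    nlinarith
  · simp; positivity
  · -- m < x : g x - c ≥ κ (x - m)
    have hgx : c < g x := by
      by_contra h
      push_neg at h
      have : x ∈ A := Set.mem_insert_of_mem _ ⟨hx, h⟩
      exact absurd (le_csSup hAbd this) (not_le.2 hmx)
    have key : κ * (x - m) ≤ g x - c := by
      refine le_of_forall_pos_le_add fun ε hε => ?_
      have hδ : 0 < ε / κ := div_pos hε hκ
      have hκε : κ * (ε / κ) = ε := by field_simp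
      rcases le_or_gt (x - m) (ε / κ) with h | h
      · have : κ * (x - m) ≤ ε := by nlinarith
        linarith
      · have hyx : m + ε / κ < x := by linarith
        have hys : s < m + ε / κ := lt_of_le_of_lt hsm (by linarith)
        have hyc : c < g (m + ε / κ) := by
          by_contra hc
          push_neg at hc
          have hmem : m + ε / κ ∈ A :=
            Set.mem_insert_of_mem _ ⟨⟨hys.le, hyx.le.trans hx.2⟩, hc⟩
          have := le_csSup hAbd hmem
          linarith
        have h1 := hg (m + ε / κ) x hys.le hyx hx.2
        have h2 : κ * (x - (m + ε / κ)) = κ * (x - m) - ε := by field_simp; ring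
        linarith
    have h0 : 0 ≤ κ * (x - m) := by nlinarith
    nlinarith

lemma cell_floor (g : ℝ → ℝ) (κ s t : ℝ) (hκ : 0 < κ) (hst : s ≤ t)
    (hg : ∀ x y, s ≤ x → x < y → y ≤ t → κ * (y - x) ≤ g y - g x) (c : ℝ)
    (hint : IntegrableOn (fun x => (g x - c) ^ 2) (Set.Ioo s t)) :
    κ ^ 2 * (t - s) ^ 3 / 12 ≤ ∫ x in Set.Ioo s t, (g x - c) ^ 2 := by
  obtain ⟨m, hm, hbd⟩ := pointwise_floor g κ s t hκ hst hg c
  have hcont : Continuous fun x : ℝ => κ ^ 2 * (x - m) ^ 2 := by continuity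
  have h1 : (∫ x in Set.Ioo s t, κ ^ 2 * (x - m) ^ 2)
      ≤ ∫ x in Set.Ioo s t, (g x - c) ^ 2 := by
    refine setIntegral_mono_on (hcont.integrableOn_Icc.mono_set Set.Ioo_subset_Icc_self) hint measurableSet_Ioo
      (fun x hx => hbd x ⟨hx.1.le, hx.2.le⟩)
  have h2 : (∫ x in Set.Ioo s t, κ ^ 2 * (x - m) ^ 2)
      = κ ^ 2 * (((t - m) ^ 3 - (s - m) ^ 3) / 3) := by
    rw [← integral_Ioc_eq_integral_Ioo, ← intervalIntegral.integral_of_le hst,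
      intervalIntegral.integral_const_mul,
      intervalIntegral.integral_comp_sub_right (fun x => x ^ 2) m,
      integral_pow]
    norm_num
  have hp : 0 ≤ m - s := by linarith [hm.1]
  have hq : 0 ≤ t - m := by linarith [hm.2]
  have h3 : κ ^ 2 * (t - s) ^ 3 / 12 ≤ κ ^ 2 * (((t - m) ^ 3 - (s - m) ^ 3) / 3) := by
    nlinarith [mul_nonneg (sq_nonneg κ)
      (mul_nonneg (add_nonneg hp hq) (sq_nonneg ((m - s) - (t - m))))]
  linarith

/-- The class of `ℝ^J`-valued step functions constant on each cell of a partition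
of `[0,1]` into at most `M` intervals. -/
def hardClass (J M : ℕ) : Set (ℝ → EuclideanSpace ℝ (Fin J)) :=
  {w | ∃ (t : Fin (M + 1) → ℝ) (c : Fin M → EuclideanSpace ℝ (Fin J)),
    Monotone t ∧ t 0 = 0 ∧ t (Fin.last M) = 1 ∧
    ∀ i : Fin M, ∀ x ∈ Set.Ico (t i.castSucc) (t i.succ), w x = c i}

/-- covering lemma -/
lemma cell_cover {M : ℕ} (hM : 1 ≤ M) (T : Fin (M + 1) → ℝ) (hmono : Monotone T)
    (x : ℝ) (h0 : T 0 ≤ x) (h1 : x < T (Fin.last M)) :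
    ∃ i : Fin M, x ∈ Set.Ico (T i.castSucc) (T i.succ) := by
  classical
  set S : Finset (Fin M) := Finset.univ.filter (fun i => T i.castSucc ≤ x) with hS
  have hSne : S.Nonempty := by
    refine ⟨⟨0, hM⟩, ?_⟩
    simp only [hS, Finset.mem_filter, Finset.mem_univ, true_and]
    have : (Fin.castSucc (⟨0, hM⟩ : Fin M)) = 0 := by ext; simp
    rw [this]; exact h0
  set i := S.max' hSne with hi
  have hiS : i ∈ S := S.max'_mem hSne
  have hile : T i.castSucc ≤ x := by
    simpa only [hS, Finset.mem_filter, Finset.mem_univ, true_and] using hiS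
  refine ⟨i, hile, ?_⟩
  by_contra hcon
  push_neg at hcon
  rcases lt_or_eq_of_le (Nat.succ_le_of_lt i.isLt) with hlt | heq
  · set j : Fin M := ⟨(i : ℕ) + 1, hlt⟩ with hj
    have hjS : j ∈ S := by
      simp only [hS, Finset.mem_filter, Finset.mem_univ, true_and]
      have : (Fin.castSucc j) = i.succ := by ext; simp [hj]
      rw [this]; exact hcon
    have := S.le_max' j hjS
    rw [← hi] at this
    have : (j : ℕ) ≤ (i : ℕ) := this
    simp [hj] at this
  · have : i.succ = Fin.last M := by ext; simpa using heq
    rw [this] at hcon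
    exact absurd hcon (not_le.2 h1)


set_option maxHeartbeats 1000000 in
/-- **Projected overlap floor for vector-valued hard classes.** If `X ~ Unif[0,1]`,
`wstar` is measurable and square-integrable, and the projection `x ↦ ⟨v, wstar x⟩`
along a unit vector `v` satisfies κ-growth on `[a,b] ⊆ [0,1]`, then for every
`M ≥ 1` the best `M`-interval hard approximation error is at least
`κ² (b-a)³ / (12 M²)`. -/
theorem projected_overlap_floor
    {J M : ℕ} (hM : 1 ≤ M)
    (wstar : ℝ → EuclideanSpace ℝ (Fin J)) (hwmeas : Measurable wstar)
    (hwL2 : Integrable (fun x => ‖wstar x‖ ^ 2)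
      (volume.restrict (Set.Icc (0 : ℝ) 1)))
    (v : EuclideanSpace ℝ (Fin J)) (hv : ‖v‖ = 1)
    (a b κ : ℝ) (ha : 0 ≤ a) (hab : a ≤ b) (hb : b ≤ 1) (hκ : 0 < κ)
    (hgrowth : ∀ s t : ℝ, a ≤ s → s < t → t ≤ b →
      κ * (t - s) ≤ (inner ℝ v (wstar t) : ℝ) - (inner ℝ v (wstar s) : ℝ)) :
    κ ^ 2 * (b - a) ^ 3 / (12 * (M : ℝ) ^ 2)
      ≤ sInf ((fun w => ∫ x in Set.Icc (0 : ℝ) 1, ‖wstar x - w x‖ ^ 2) ''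
          hardClass J M) := by
  have hMR : (0 : ℝ) < (M : ℝ) := by exact_mod_cast hM
  -- nonemptiness of the image
  have hne : ((fun w => ∫ x in Set.Icc (0 : ℝ) 1, ‖wstar x - w x‖ ^ 2) ''
      hardClass J M).Nonempty := by
    refine ⟨_, ⟨fun _ => 0, ⟨fun i => (i : ℕ) / M, fun _ => 0, ?_, ?_, ?_, ?_⟩, rfl⟩⟩
    · intro i j hij
      have h : ((i : ℕ) : ℝ) ≤ ((j : ℕ) : ℝ) := by exact_mod_cast hij
      exact (div_le_div_iff_of_pos_right hMR).2 h
    · simp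
    · simp [Fin.last]
      exact_mod_cast hMR.ne'
    · intro i x _; rfl
  refine le_csInf hne ?_
  rintro r ⟨w, ⟨T, C, hTmono, hT0, hT1, hcell⟩, rfl⟩
  -- notations
  set g : ℝ → ℝ := fun x => (inner ℝ v (wstar x) : ℝ) with hg
  -- the measurable step version of w
  set ws : ℝ → EuclideanSpace ℝ (Fin J) := fun x =>
    ∑ i : Fin M, Set.indicator (Set.Ico (T i.castSucc) (T i.succ)) (fun _ => C i) x
    with hws
  have hws_meas : Measurable ws :=
    Finset.measurable_sum _ fun i _ => measurable_const.indicator measurableSet_Ico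
  have hws_cell : ∀ (i : Fin M) (x : ℝ), x ∈ Set.Ico (T i.castSucc) (T i.succ) →
      ws x = C i := by
    intro i x hx
    show (∑ j : Fin M,
      (Set.Ico (T j.castSucc) (T j.succ)).indicator (fun _ => C j) x) = C i
    rw [Finset.sum_eq_single i]
    · simp [Set.indicator_of_mem hx]
    · intro j _ hj
      apply Set.indicator_of_notMem
      intro hxj
      rcases lt_or_gt_of_ne hj with h | h
      · have : T j.succ ≤ T i.castSucc := hTmono (by
          show (j : ℕ) + 1 ≤ (i : ℕ); exact h)
        exact absurd (hxj.2.trans_le (this.trans hx.1)) (lt_irrefl x)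
      · have : T i.succ ≤ T j.castSucc := hTmono (by
          show (i : ℕ) + 1 ≤ (j : ℕ); exact h)
        exact absurd (hx.2.trans_le (this.trans hxj.1)) (lt_irrefl x)
    · simp
  have hws_eq : ∀ x ∈ Set.Ico (0 : ℝ) 1, w x = ws x := by
    intro x hx
    obtain ⟨i, hi⟩ := cell_cover hM T hTmono x (hT0 ▸ hx.1) (hT1 ▸ hx.2)
    rw [hcell i x hi, hws_cell i x hi]
  -- a.e. equality of w and ws on [0,1]
  have hae : ∀ᵐ x ∂(volume.restrict (Set.Icc (0 : ℝ) 1)), w x = ws x := by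
    have hIco : ∀ᵐ x ∂(volume.restrict (Set.Icc (0 : ℝ) 1)), x ∈ Set.Ico (0 : ℝ) 1 := by
      rw [Filter.eventually_iff, mem_ae_iff]
      rw [Measure.restrict_apply' measurableSet_Icc]
      refine measure_mono_null (fun x hx => ?_) (measure_singleton (1 : ℝ))
      have hx1 : x ∉ Set.Ico (0:ℝ) 1 := hx.1
      have hx2 := hx.2
      simp only [Set.mem_Ico, not_and, not_lt] at hx1
      simp only [Set.mem_Icc] at hx2
      exact Set.mem_singleton_iff.2 (le_antisymm hx2.2 (hx1 hx2.1))
    filter_upwards [hIco] with x hx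
    exact hws_eq x hx
  -- bound on the step function
  set B : ℝ := ∑ i : Fin M, ‖C i‖ with hB
  have hws_bd : ∀ x, ‖ws x‖ ≤ B := by
    intro x
    refine (norm_sum_le _ _).trans (Finset.sum_le_sum fun i _ => ?_)
    exact norm_indicator_le_norm_self (fun _ => C i) x
  -- integrability
  have hG' : IntegrableOn (fun x => ‖wstar x - ws x‖ ^ 2) (Set.Icc (0 : ℝ) 1) := by
    have hconst : IntegrableOn (fun _ : ℝ => 2 * B ^ 2) (Set.Icc (0 : ℝ) 1) := by
      refine integrableOn_const ?_
      rw [Real.volume_Icc]; norm_num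
    have hbound : IntegrableOn (fun x => 2 * ‖wstar x‖ ^ 2 + 2 * B ^ 2)
        (Set.Icc (0 : ℝ) 1) := (hwL2.const_mul 2).add hconst
    refine Integrable.mono' hbound
      (((hwmeas.sub hws_meas).norm.pow_const 2).aestronglyMeasurable)
      (Filter.Eventually.of_forall fun x => ?_)
    have h1 := norm_sub_le (wstar x) (ws x)
    have h2 := hws_bd x
    have h3 := norm_nonneg (wstar x)
    have h4 := norm_nonneg (ws x)
    have h5 := pow_le_pow_left₀ (norm_nonneg (wstar x - ws x)) h1 2
    rw [Real.norm_eq_abs, abs_of_nonneg (by positivity)]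
    nlinarith [sq_nonneg (‖wstar x‖ - ‖ws x‖)]
  have hG : IntegrableOn (fun x => ‖wstar x - w x‖ ^ 2) (Set.Icc (0 : ℝ) 1) :=
    hG'.congr (hae.mono fun x hx => by simp only [hx])
  -- projected squared error and its integrability
  set F : ℝ → ℝ := fun x => (g x - (inner ℝ v (w x) : ℝ)) ^ 2 with hF
  set F' : ℝ → ℝ := fun x => (g x - (inner ℝ v (ws x) : ℝ)) ^ 2 with hF'
  have hgmeas : Measurable g := Measurable.inner measurable_const hwmeas
  have hCS : ∀ (u : EuclideanSpace ℝ (Fin J)) (x : ℝ),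
      (g x - (inner ℝ v u : ℝ)) ^ 2 ≤ ‖wstar x - u‖ ^ 2 := by
    intro u x
    have h1 : |(inner ℝ v (wstar x - u) : ℝ)| ≤ ‖wstar x - u‖ := by
      have := abs_real_inner_le_norm v (wstar x - u)
      rwa [hv, one_mul] at this
    have h2 : (inner ℝ v (wstar x - u) : ℝ) = g x - (inner ℝ v u : ℝ) := by
      rw [inner_sub_right]
    calc (g x - (inner ℝ v u : ℝ)) ^ 2 = |(inner ℝ v (wstar x - u) : ℝ)| ^ 2 := by
          rw [h2, sq_abs]
      _ ≤ ‖wstar x - u‖ ^ 2 := by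
          exact pow_le_pow_left₀ (abs_nonneg _) h1 2
  have hF'int : IntegrableOn F' (Set.Icc (0 : ℝ) 1) := by
    refine Integrable.mono' hG'
      (((hgmeas.sub (Measurable.inner measurable_const hws_meas)).pow_const 2).aestronglyMeasurable)
      (Filter.Eventually.of_forall fun x => ?_)
    rw [Real.norm_eq_abs, abs_of_nonneg (sq_nonneg _)]
    exact hCS (ws x) x
  have hFint : IntegrableOn F (Set.Icc (0 : ℝ) 1) :=
    hF'int.congr (hae.mono fun x hx => by simp only [hF, hF', hx])
  -- the clamped partition points
  set un : ℕ → ℝ := fun k =>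
    min b (max a (T ⟨min k M, Nat.lt_succ_of_le (min_le_right _ _)⟩)) with hun
  have hun_eq : ∀ (k : ℕ) (hk : k ≤ M),
      un k = min b (max a (T ⟨k, Nat.lt_succ_of_le hk⟩)) := by
    intro k hk
    simp only [hun, Nat.min_eq_left hk]
  have hun_mono : Monotone un := by
    intro k l hkl
    have : T ⟨min k M, Nat.lt_succ_of_le (min_le_right _ _)⟩
        ≤ T ⟨min l M, Nat.lt_succ_of_le (min_le_right _ _)⟩ :=
      hTmono (by simp only [Fin.le_def]; omega)
    exact min_le_min le_rfl (max_le_max le_rfl this)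
  have hun0 : un 0 = a := by
    rw [hun_eq 0 (Nat.zero_le M)]
    have : (⟨0, Nat.lt_succ_of_le (Nat.zero_le M)⟩ : Fin (M + 1)) = 0 := rfl
    rw [this, hT0, max_eq_left ha, min_eq_right hab]
  have hunM : un M = b := by
    rw [hun_eq M le_rfl]
    have : (⟨M, Nat.lt_succ_of_le le_rfl⟩ : Fin (M + 1)) = Fin.last M := rfl
    rw [this, hT1, max_eq_right (hab.trans hb), min_eq_left hb]
  have hun_mem : ∀ k, un k ∈ Set.Icc a b := by
    intro k
    constructor
    · exact le_min hab (le_max_left _ _)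
    · exact min_le_left _ _
  -- interval integrability of F on each piece
  have hsubIcc : ∀ k l : ℕ, Set.uIcc (un k) (un l) ⊆ Set.Icc (0 : ℝ) 1 := by
    intro k l
    refine (Set.uIcc_subset_Icc (hun_mem k) (hun_mem l)).trans ?_
    exact Set.Icc_subset_Icc ha hb
  have hFii : ∀ k < M, IntervalIntegrable F volume (un k) (un (k + 1)) := by
    intro k _
    exact (hFint.mono_set (hsubIcc k (k + 1))).intervalIntegrable
  -- chain of inequalities
  have step1 : ∫ x in Set.Icc (0 : ℝ) 1, F x
      ≤ ∫ x in Set.Icc (0 : ℝ) 1, ‖wstar x - w x‖ ^ 2 :=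
    setIntegral_mono_on hFint hG measurableSet_Icc (fun x _ => hCS (w x) x)
  have step2 : ∫ x in Set.Ioc a b, F x ≤ ∫ x in Set.Icc (0 : ℝ) 1, F x := by
    refine setIntegral_mono_set hFint
      (Filter.Eventually.of_forall fun x => sq_nonneg _) ?_
    exact Filter.Eventually.of_forall fun x hx => ⟨ha.trans hx.1.le, hx.2.trans hb⟩
  have step4 : ∑ k ∈ Finset.range M, ∫ x in (un k)..(un (k + 1)), F x
      = ∫ x in Set.Ioc a b, F x := by
    rw [intervalIntegral.sum_integral_adjacent_intervals hFii, hun0, hunM,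
      intervalIntegral.integral_of_le hab]
  -- per-cell lower bound
  have step5 : ∀ k ∈ Finset.range M,
      κ ^ 2 * (un (k + 1) - un k) ^ 3 / 12 ≤ ∫ x in (un k)..(un (k + 1)), F x := by
    intro k hk
    have hkM : k < M := Finset.mem_range.1 hk
    have hle : un k ≤ un (k + 1) := hun_mono (Nat.le_succ k)
    rw [intervalIntegral.integral_of_le hle, integral_Ioc_eq_integral_Ioo]
    rcases eq_or_lt_of_le hle with heq | hlt
    · rw [← heq]
      simp only [sub_self]
      rw [show (0:ℝ) ^ 3 = 0 by ring, mul_zero, zero_div]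
      exact setIntegral_nonneg measurableSet_Ioo (fun x _ => sq_nonneg _)
    · set i : Fin M := ⟨k, hkM⟩ with hi
      have hz1 : un k = min b (max a (T i.castSucc)) := by
        rw [hun_eq k hkM.le]; rfl
      have hz2 : un (k + 1) = min b (max a (T i.succ)) := by
        rw [hun_eq (k + 1) hkM]; rfl
      -- T i.castSucc ≤ b
      have hz1b : T i.castSucc ≤ b := by
        by_contra hcon
        push_neg at hcon
        have h1 : un k = b := by
          rw [hz1, min_eq_left ((le_max_right a _).trans' hcon.le)]
        have := (hun_mem (k + 1)).2
        rw [h1] at hlt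
        exact absurd this (not_le.2 hlt)
      -- a ≤ T i.succ
      have hz2a : a ≤ T i.succ := by
        by_contra hcon
        push_neg at hcon
        have hcs : T i.castSucc ≤ T i.succ := hTmono (by simp [Fin.le_def])
        have h2 : un (k + 1) = a := by
          rw [hz2, max_eq_left hcon.le, min_eq_right hab]
        have := (hun_mem k).1
        rw [h2] at hlt
        exact absurd this (not_le.2 hlt)
      have hlb : T i.castSucc ≤ un k := by
        rw [hz1]; exact le_min hz1b (le_max_right _ _)
      have hub : un (k + 1) ≤ T i.succ := by
        rw [hz2]; exact (min_le_right _ _).trans (max_le hz2a le_rfl)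
      have hIoo : Set.Ioo (un k) (un (k + 1)) ⊆ Set.Ico (T i.castSucc) (T i.succ) :=
        fun x hx => ⟨hlb.trans hx.1.le, hx.2.trans_le hub⟩
      have hcongr : Set.EqOn F (fun x => (g x - (inner ℝ v (C i) : ℝ)) ^ 2)
          (Set.Ioo (un k) (un (k + 1))) := by
        intro x hx
        simp only [hF]
        rw [hcell i x (hIoo hx)]
      rw [setIntegral_congr_fun measurableSet_Ioo hcongr]
      refine cell_floor g κ (un k) (un (k + 1)) hκ hle ?_ _ ?_
      · intro x y hx hxy hy
        exact hgrowth x y ((hun_mem k).1.trans hx) hxy (hy.trans (hun_mem (k + 1)).2)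
      · refine (hFint.mono_set ?_).congr_fun hcongr measurableSet_Ioo
        exact (Set.Ioo_subset_Icc_self.trans
          (Set.Icc_subset_Icc (hun_mem k).1 (hun_mem (k+1)).2)).trans
          (Set.Icc_subset_Icc ha hb)
  -- summation and power mean
  have hsum : ∑ k ∈ Finset.range M, (un (k + 1) - un k) = b - a := by
    rw [Finset.sum_range_sub, hun0, hunM]
  have hpow : (b - a) ^ 3 / (M : ℝ) ^ 2
      ≤ ∑ k ∈ Finset.range M, (un (k + 1) - un k) ^ 3 := by
    have := pow_sum_div_card_le_sum_pow (s := Finset.range M)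
      (f := fun k => un (k + 1) - un k)
      (fun i _ => sub_nonneg.2 (hun_mono (Nat.le_succ i))) 2
    rw [hsum, Finset.card_range] at this
    exact_mod_cast this
  calc κ ^ 2 * (b - a) ^ 3 / (12 * (M : ℝ) ^ 2)
      = (κ ^ 2 / 12) * ((b - a) ^ 3 / (M : ℝ) ^ 2) := by ring
    _ ≤ (κ ^ 2 / 12) * ∑ k ∈ Finset.range M, (un (k + 1) - un k) ^ 3 := by
        exact mul_le_mul_of_nonneg_left hpow (by positivity)
    _ = ∑ k ∈ Finset.range M, κ ^ 2 * (un (k + 1) - un k) ^ 3 / 12 := by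
        rw [Finset.mul_sum]; exact Finset.sum_congr rfl fun k _ => by ring
    _ ≤ ∑ k ∈ Finset.range M, ∫ x in (un k)..(un (k + 1)), F x :=
        Finset.sum_le_sum step5
    _ = ∫ x in Set.Ioc a b, F x := step4
    _ ≤ ∫ x in Set.Icc (0 : ℝ) 1, F x := step2
    _ ≤ ∫ x in Set.Icc (0 : ℝ) 1, ‖wstar x - w x‖ ^ 2 := step1
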